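/- Let d ≥ 1, let U be a unitary operator on ℂ^d, and let {ν_i}_{i=0}^{d²-1} be an orthonormal basis of ℂ^d ⊗ ℂ^d such that |⟨ν_i, (U ⊗ I) ν_i⟩| = 1/d for every index i. Then |Tr U| ≤ 1. -/

import Mathlib

open scoped ComplexInnerProductSpace Matrix Kronecker

noncomputable section

/-- Action of a matrix indexed by `Fin d × Fin d` on `ℂ^d ⊗ ℂ^d`. -/
def act2 {d : ℕ} (M : Matrix (Fin d × Fin d) (Fin d × Fin d) ℂ)
    (ψ : EuclideanSpace ℂ (Fin d × Fin d)) : EuclideanSpace ℂ (Fin d × Fin d) :=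
  Matrix.toEuclideanLin M ψ

lemma trace_eq_sum_inner' {n : Type*} [Fintype n] [DecidableEq n]
    (M : Matrix n n ℂ) (ν : OrthonormalBasis n ℂ (EuclideanSpace ℂ n)) :
    Matrix.trace M = ∑ i, ⟪ν i, Matrix.toEuclideanLin M (ν i)⟫ := by
  have h1 : LinearMap.trace ℂ _ (Matrix.toEuclideanLin M) = Matrix.trace M := by
    rw [Matrix.toEuclideanLin_eq_toLin, LinearMap.trace_eq_matrix_trace ℂ (PiLp.basisFun 2 ℂ n),
      LinearMap.toMatrix_toLin]
  rw [← h1, LinearMap.trace_eq_matrix_trace ℂ ν.toBasis, Matrix.trace]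
  congr 1
  ext i
  rw [Matrix.diag_apply, LinearMap.toMatrix_apply, OrthonormalBasis.coe_toBasis_repr_apply,
    OrthonormalBasis.repr_apply_apply, OrthonormalBasis.coe_toBasis]

theorem stmt_12 {d : ℕ} (hd : 1 ≤ d)
    (U : Matrix (Fin d) (Fin d) ℂ)
    (hU : U ∈ Matrix.unitaryGroup (Fin d) ℂ)
    (ν : OrthonormalBasis (Fin d × Fin d) ℂ (EuclideanSpace ℂ (Fin d × Fin d)))
    (h : ∀ i : Fin d × Fin d,
      ‖⟪ν i, act2 (U ⊗ₖ (1 : Matrix (Fin d) (Fin d) ℂ)) (ν i)⟫‖ = 1 / d) :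
    ‖Matrix.trace U‖ ≤ 1 := by
  have hdc : (0 : ℝ) < d := by exact_mod_cast hd
  have key : Matrix.trace (U ⊗ₖ (1 : Matrix (Fin d) (Fin d) ℂ))
      = ∑ i, ⟪ν i, act2 (U ⊗ₖ (1 : Matrix (Fin d) (Fin d) ℂ)) (ν i)⟫ :=
    trace_eq_sum_inner' _ ν
  have htr : Matrix.trace (U ⊗ₖ (1 : Matrix (Fin d) (Fin d) ℂ))
      = (d : ℂ) * Matrix.trace U := by
    rw [Matrix.trace_kronecker, Matrix.trace_one]
    simp [mul_comm]
  have hbound : ‖(d : ℂ) * Matrix.trace U‖ ≤ (d : ℝ) := by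
    rw [← htr, key]
    calc ‖∑ i, ⟪ν i, act2 (U ⊗ₖ (1 : Matrix (Fin d) (Fin d) ℂ)) (ν i)⟫‖
        ≤ ∑ i : Fin d × Fin d, ‖⟪ν i, act2 (U ⊗ₖ (1 : Matrix (Fin d) (Fin d) ℂ)) (ν i)⟫‖ :=
          norm_sum_le _ _
      _ = ∑ _i : Fin d × Fin d, (1 / d : ℝ) := by simp_rw [h]
      _ = (d : ℝ) := by
          rw [Finset.sum_const, Finset.card_univ, Fintype.card_prod, Fintype.card_fin]
          rw [nsmul_eq_mul, Nat.cast_mul]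
          field_simp
  rw [norm_mul, Complex.norm_natCast] at hbound
  nlinarith [norm_nonneg (Matrix.trace U)]
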